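/- The optimal dual solution for the D-norm protection LP is achieved by setting q equal to the (Γ+1)-st largest cost c_{(Γ+1)} (or 0 if Γ = |Ω|) and p_i = max(c_i − q, 0); with this choice q·Γ + Σ_i p_i equals the sum of the Γ largest costs. -/

import Mathlib

private lemma sum_map_sub_aux (L : List ℝ) (q : ℝ) :
    (L.map (fun x => x - q)).sum = L.sum - L.length * q := by
  induction L with
  | nil => simp
  | cons a t ih => simp [ih]; ring

theorem dnorm_dual_optimal_solution {Ω : Type*} [Fintype Ω] [DecidableEq Ω]
    (c : Ω → ℝ) (hc : ∀ i, 0 ≤ c i) (Γ : ℕ) (hΓ : Γ ≤ Fintype.card Ω) :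
    let l := List.insertionSort (· ≥ ·) ((Finset.univ.val.map c).toList)
    let q := l.getD Γ 0
    let p := fun i => max (c i - q) 0
    0 ≤ q ∧ (∀ i, 0 ≤ p i) ∧ (∀ i, c i ≤ q + p i) ∧
      q * (Γ : ℝ) + ∑ i, p i = (l.take Γ).sum := by
  intro l q p
  set f : ℝ → ℝ := fun x => max (x - q) 0 with hf
  have hsort : l.Pairwise (· ≥ ·) := List.pairwise_insertionSort _ _
  have hperm : l.Perm ((Finset.univ.val.map c).toList) := List.perm_insertionSort _ _
  have hlen : l.length = Fintype.card Ω := by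
    rw [hperm.length_eq]; rw [Multiset.length_toList, Multiset.card_map]; rfl
  have hmem : ∀ x ∈ l, 0 ≤ x := by
    intro x hx
    rw [hperm.mem_iff, Multiset.mem_toList, Multiset.mem_map] at hx
    obtain ⟨i, -, rfl⟩ := hx
    exact hc i
  have hq0 : 0 ≤ q := by
    rcases lt_or_eq_of_le hΓ with h | h
    · have h' : Γ < l.length := by omega
      show 0 ≤ l.getD Γ 0
      rw [List.getD_eq_getElem l 0 h']
      exact hmem _ (List.getElem_mem h')
    · show 0 ≤ l.getD Γ 0
      rw [List.getD_eq_default]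
      omega
  -- key inequalities
  have htake_ge : ∀ x ∈ l.take Γ, q ≤ x := by
    intro x hx
    rcases lt_or_eq_of_le hΓ with h | h
    · have h' : Γ < l.length := by omega
      have hqe : q = l[Γ] := List.getD_eq_getElem l 0 h'
      have hqd : q ∈ l.drop Γ := by
        rw [hqe]
        have : (l.drop Γ)[0]'(by simp [List.length_drop]; omega) = l[Γ] := by
          simp [List.getElem_drop]
        rw [← this]
        exact List.getElem_mem _
      exact hsort.rel_of_mem_take_of_mem_drop hx hqd
    · have : q = 0 := by
        show l.getD Γ 0 = 0
        rw [List.getD_eq_default]; omega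
      rw [this]
      exact hmem x (List.mem_of_mem_take hx)
  have hdrop_le : ∀ y ∈ l.drop Γ, y ≤ q := by
    intro y hy
    have hne : Γ < l.length := by
      by_contra hcon
      rw [List.drop_eq_nil_of_le (by omega)] at hy
      exact absurd hy List.not_mem_nil
    have hqe : q = l[Γ] := List.getD_eq_getElem l 0 hne
    rw [List.mem_iff_getElem] at hy
    obtain ⟨j, hj, rfl⟩ := hy
    rw [List.getElem_drop]
    rw [hqe]
    have := hsort.rel_get_of_le (a := ⟨Γ, hne⟩)
      (b := ⟨Γ + j, by rw [List.length_drop] at hj; omega⟩) (by simp)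
    simpa [List.get_eq_getElem] using this
  refine ⟨hq0, fun i => le_max_right _ _, fun i => ?_, ?_⟩
  · have := le_max_left (c i - q) 0
    simp only [p]; linarith
  · have hpf : ∑ i, p i = (l.map f).sum := by
      rw [(hperm.map f).sum_eq]
      rw [Finset.sum]
      show (Multiset.map (f ∘ c) Finset.univ.val).sum = _
      rw [← Multiset.map_map]
      conv_lhs => rw [← Multiset.coe_toList (Finset.univ.val.map c)]
      rw [Multiset.map_coe, Multiset.sum_coe]
    have hsplit : (l.map f).sum = ((l.take Γ).map f).sum + ((l.drop Γ).map f).sum := by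
      rw [← List.sum_append, ← List.map_append, List.take_append_drop]
    have htake : (l.take Γ).map f = (l.take Γ).map (fun x => x - q) := by
      apply List.map_congr_left
      intro x hx
      exact max_eq_left (sub_nonneg.2 (htake_ge x hx))
    have hdrop : ((l.drop Γ).map f).sum = 0 := by
      apply List.sum_eq_zero
      intro x hx
      rw [List.mem_map] at hx
      obtain ⟨y, hy, rfl⟩ := hx
      exact max_eq_right (by linarith [hdrop_le y hy])
    have hlt : (l.take Γ).length = Γ := by
      rw [List.length_take]; omega
    rw [hpf, hsplit, htake, hdrop, sum_map_sub_aux, hlt]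
    ring
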